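/- Let X₁, X₂, … be independent, identically distributed real random variables with mean μ > 0 and standard deviation at most cμ, where c > 0 is a known constant. Fix ε ∈ (0,1/3) and δ ∈ (0,1). Set m = ⌈(c/ε)² f(ε)⌉ and n = 2⌈ln(2/δ)/ln(4/3)⌉ + 1. For i = 1,…,n let Sᵢ = (X_{(i−1)m+1} + ⋯ + X_{im})/m be the average of the i-th block of m samples, and let R₁,…,R_n be i.i.d. uniform random variables on [1−ε, 1+ε], independent of the Xⱼ. Let μ̂ = median{S₁R₁, …, S_nR_n}. Then P(|μ̂ − μ| > εμ) ≤ δ, and μ̂ is computed from exactly m·n = ⌈(c/ε)² f(ε)⌉·(2⌈ln(2/δ)/ln(4/3)⌉ + 1) samples of the sequence. -/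

import Mathlib

open MeasureTheory ProbabilityTheory Real
open scoped ENNReal

/-- The uniform probability measure on the interval `[a, b]`. -/
noncomputable def uniformIcc (a b : ℝ) : Measure ℝ :=
  (ENNReal.ofReal (b - a))⁻¹ • (MeasureTheory.volume.restrict (Set.Icc a b))

/-- The median of `2*n+1` real values: their `(n+1)`-st smallest value. -/
noncomputable def medianOf {n : ℕ} (v : Fin (2 * n + 1) → ℝ) : ℝ :=
  (Multiset.sort (↑(List.ofFn v)) (· ≤ ·)).get ⟨n, by simp [Multiset.length_sort]; omega⟩

/-- The nuisance factor `f(ε) = (1+ε)/((1-ε)² (1+ε-ε²))`. -/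
noncomputable def nuisance (ε : ℝ) : ℝ := (1 + ε) / ((1 - ε) ^ 2 * (1 + ε - ε ^ 2))

lemma uniformIcc_univ {a b : ℝ} (h : a < b) : uniformIcc a b Set.univ = 1 := by
  simp only [uniformIcc, Measure.smul_apply, smul_eq_mul,
    Measure.restrict_apply MeasurableSet.univ, Set.univ_inter, Real.volume_Icc]
  exact ENNReal.inv_mul_cancel (by simp [ENNReal.ofReal_eq_zero, not_le]; linarith)
    ENNReal.ofReal_ne_top

lemma uniformIcc_le_one {a b : ℝ} (h : a < b) (s : Set ℝ) : uniformIcc a b s ≤ 1 :=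
  (measure_mono (Set.subset_univ s)).trans (uniformIcc_univ h).le

lemma uniformIcc_le_of_subset_Ioc {a b : ℝ} (h : a < b) {s : Set ℝ} {c d : ℝ}
    (hs : s ∩ Set.Icc a b ⊆ Set.Ioc c d) :
    uniformIcc a b s ≤ ENNReal.ofReal ((d - c) / (b - a)) := by
  have h1 : uniformIcc a b s = (ENNReal.ofReal (b - a))⁻¹ * volume (s ∩ Set.Icc a b) := by
    simp [uniformIcc, Measure.smul_apply, smul_eq_mul, Measure.restrict_apply' measurableSet_Icc]
  rw [h1, ENNReal.ofReal_div_of_pos (sub_pos.2 h), ENNReal.div_eq_inv_mul]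
  exact mul_le_mul_right ((measure_mono hs).trans_eq (Real.volume_Ioc)) _

lemma uniformIcc_le_of_subset_Ico {a b : ℝ} (h : a < b) {s : Set ℝ} {c d : ℝ}
    (hs : s ∩ Set.Icc a b ⊆ Set.Ico c d) :
    uniformIcc a b s ≤ ENNReal.ofReal ((d - c) / (b - a)) := by
  have h1 : uniformIcc a b s = (ENNReal.ofReal (b - a))⁻¹ * volume (s ∩ Set.Icc a b) := by
    simp [uniformIcc, Measure.smul_apply, smul_eq_mul, Measure.restrict_apply' measurableSet_Icc]
  rw [h1, ENNReal.ofReal_div_of_pos (sub_pos.2 h), ENNReal.div_eq_inv_mul]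
  exact mul_le_mul_right ((measure_mono hs).trans_eq (Real.volume_Ico)) _

/-- helper: `x ≤ (x+s₀)²/(4s₀)` -/
lemma le_quad_aux {x s₀ : ℝ} (hs : 0 < s₀) : x ≤ (x + s₀)^2 / (4*s₀) := by
  rw [le_div_iff₀ (by linarith)]
  nlinarith [sq_nonneg (x - s₀)]

lemma one_le_quad_aux {x s₀ : ℝ} (hs : 0 < s₀) (hx : 1 ≤ x) : 1 ≤ (x + s₀)^2 / (4*s₀) := by
  rw [le_div_iff₀ (by linarith)]
  nlinarith [sq_nonneg (x - s₀)]

lemma quad_nonneg_aux {x s₀ : ℝ} (hs : 0 < s₀) : 0 ≤ (x + s₀)^2 / (4*s₀) := by positivity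

lemma unif_plus {ε μc : ℝ} (hε1 : 0 < ε) (hε2 : ε < 1/3) (hμ : 0 < μc) (s : ℝ) :
    uniformIcc (1-ε) (1+ε) {r | (1+ε)*μc < s*r} ≤
      ENNReal.ofReal (((1+ε)/(2*ε)*((s-μc)/μc) + (1-ε^2)/2)^2 / (4*((1-ε^2)/2))) := by
  have hab : (1-ε:ℝ) < 1+ε := by linarith
  have hs₀ : (0:ℝ) < (1-ε^2)/2 := by nlinarith
  rcases le_or_gt s 0 with hs | hs
  · have hsub : {r : ℝ | (1+ε)*μc < s*r} ∩ Set.Icc (1-ε) (1+ε) ⊆ Set.Ioc 0 0 := by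
      rintro r ⟨hr1, hr2, hr3⟩
      exfalso
      have hr0 : 0 < r := by linarith
      have : s*r ≤ 0 := mul_nonpos_of_nonpos_of_nonneg hs hr0.le
      have : 0 < (1+ε)*μc := by positivity
      simp only [Set.mem_setOf_eq] at hr1
      linarith
    refine le_trans (uniformIcc_le_of_subset_Ioc hab hsub) (ENNReal.ofReal_le_ofReal ?_)
    rw [sub_zero, zero_div]
    exact quad_nonneg_aux hs₀
  · have hsub : {r : ℝ | (1+ε)*μc < s*r} ∩ Set.Icc (1-ε) (1+ε) ⊆
        Set.Ioc ((1+ε)*μc/s) (1+ε) := by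
      rintro r ⟨hr1, hr2, hr3⟩
      simp only [Set.mem_setOf_eq] at hr1
      exact ⟨(div_lt_iff₀ hs).mpr (by linarith [hr1]), hr3⟩
    refine le_trans (uniformIcc_le_of_subset_Ioc hab hsub) (ENNReal.ofReal_le_ofReal ?_)
    have hdiv : (s-μc)/s ≤ (s-μc)/μc := by
      rw [div_le_div_iff₀ hs hμ]; nlinarith [sq_nonneg (s-μc)]
    calc ((1+ε) - (1+ε)*μc/s)/((1+ε)-(1-ε)) = (1+ε)/(2*ε)*((s-μc)/s) := by
          rw [show (1+ε)-(1-ε) = 2*ε by ring]; field_simp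
      _ ≤ (1+ε)/(2*ε)*((s-μc)/μc) := by
          apply mul_le_mul_of_nonneg_left hdiv; positivity
      _ ≤ _ := le_quad_aux hs₀

lemma unif_minus {ε μc : ℝ} (hε1 : 0 < ε) (hε2 : ε < 1/3) (hμ : 0 < μc) (s : ℝ) :
    uniformIcc (1-ε) (1+ε) {r | s*r < (1-ε)*μc} ≤
      ENNReal.ofReal (((1+ε)/(2*ε)*((μc-s)/μc) + (1-ε^2)/2)^2 / (4*((1-ε^2)/2))) := by
  have hab : (1-ε:ℝ) < 1+ε := by linarith
  have hs₀ : (0:ℝ) < (1-ε^2)/2 := by nlinarith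
  rcases lt_or_ge ((1+ε)*s) ((1-ε)*μc) with hbig | hbig
  · refine le_trans (uniformIcc_le_one hab _) (ENNReal.one_le_ofReal.mpr ?_)
    refine one_le_quad_aux hs₀ ?_
    rw [div_mul_div_comm, le_div_iff₀ (by positivity)]
    nlinarith
  · have hs : 0 < s := by nlinarith
    have hsub : {r : ℝ | s*r < (1-ε)*μc} ∩ Set.Icc (1-ε) (1+ε) ⊆
        Set.Ico (1-ε) ((1-ε)*μc/s) := by
      rintro r ⟨hr1, hr2, hr3⟩
      simp only [Set.mem_setOf_eq] at hr1
      exact ⟨hr2, (lt_div_iff₀ hs).mpr (by linarith [hr1])⟩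
    refine le_trans (uniformIcc_le_of_subset_Ico hab hsub) (ENNReal.ofReal_le_ofReal ?_)
    rcases le_or_gt s μc with hsle | hsgt
    · have hdiv : (1-ε)*((μc-s)/s) ≤ (1+ε)*((μc-s)/μc) := by
        rw [mul_div_assoc', mul_div_assoc', div_le_div_iff₀ hs hμ]
        nlinarith [mul_le_mul_of_nonneg_left hbig (sub_nonneg.2 hsle)]
      calc ((1-ε)*μc/s - (1-ε))/((1+ε)-(1-ε)) = (1-ε)*((μc-s)/s)/(2*ε) := by
            rw [show (1+ε)-(1-ε) = 2*ε by ring]; field_simp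
        _ ≤ (1+ε)*((μc-s)/μc)/(2*ε) := by
            apply div_le_div_of_nonneg_right ?_ (by positivity)
            exact hdiv
        _ = (1+ε)/(2*ε)*((μc-s)/μc) := by ring
        _ ≤ _ := le_quad_aux hs₀
    · have h0 : ((1-ε)*μc/s - (1-ε))/((1+ε)-(1-ε)) ≤ 0 := by
        apply div_nonpos_of_nonpos_of_nonneg ?_ (by linarith)
        have : (1-ε)*μc/s ≤ (1-ε) := by
          rw [div_le_iff₀ hs]; nlinarith
        linarith
      exact h0.trans (quad_nonneg_aux hs₀)

lemma card_filter_eq_countP {N : ℕ} (v : Fin N → ℝ) (p : ℝ → Prop) [DecidablePred p] :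
    (Finset.univ.filter fun i => p (v i)).card =
      (Multiset.sort (↑(List.ofFn v)) (· ≤ ·)).countP (fun y => decide (p y)) := by
  classical
  rw [← Multiset.coe_countP, Multiset.sort_eq, ← Fin.univ_val_map, Multiset.countP_map]
  rfl

lemma count_of_lt_median {n : ℕ} (v : Fin (2*n+1) → ℝ) {x : ℝ} (hx : x < medianOf v) :
    n+1 ≤ (Finset.univ.filter fun i => x < v i).card := by
  classical
  rw [card_filter_eq_countP]
  set l : List ℝ := Multiset.sort (↑(List.ofFn v)) (· ≤ ·) with hl
  have hlen : l.length = 2*n+1 := by simp [hl]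
  have hsort : l.Pairwise (· ≤ ·) := Multiset.pairwise_sort _ _
  have hall : ∀ y ∈ l.drop n, decide (x < y) = true := by
    intro y hy
    rw [List.mem_iff_getElem] at hy
    obtain ⟨k, hk, rfl⟩ := hy
    rw [List.getElem_drop]
    simp only [decide_eq_true_eq]
    refine hx.trans_le ?_
    have : medianOf v = l.get ⟨n, by omega⟩ := rfl
    rw [this, List.get_eq_getElem, ← List.get_eq_getElem (l := l) (i := ⟨n + k, by
      rw [List.length_drop] at hk; omega⟩)]
    exact hsort.rel_get_of_le (by simp [Fin.le_def])
  calc n+1 = (l.drop n).length := by rw [List.length_drop]; omega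
    _ = (l.drop n).countP (fun y => decide (x < y)) := (List.countP_eq_length.mpr hall).symm
    _ ≤ l.countP (fun y => decide (x < y)) := by
        conv_rhs => rw [← List.take_append_drop n l]
        rw [List.countP_append]
        omega

lemma count_of_median_lt {n : ℕ} (v : Fin (2*n+1) → ℝ) {x : ℝ} (hx : medianOf v < x) :
    n+1 ≤ (Finset.univ.filter fun i => v i < x).card := by
  classical
  rw [card_filter_eq_countP v (fun y => y < x)]
  set l : List ℝ := Multiset.sort (↑(List.ofFn v)) (· ≤ ·) with hl
  have hlen : l.length = 2*n+1 := by simp [hl]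
  have hsort : l.Pairwise (· ≤ ·) := Multiset.pairwise_sort _ _
  have hall : ∀ y ∈ l.take (n+1), decide (y < x) = true := by
    intro y hy
    rw [List.mem_iff_getElem] at hy
    obtain ⟨k, hk, rfl⟩ := hy
    have hk' : k < n+1 := by
      rw [List.length_take] at hk; omega
    rw [List.getElem_take]
    simp only [decide_eq_true_eq]
    refine lt_of_le_of_lt ?_ hx
    have hm : medianOf v = l.get ⟨n, by omega⟩ := rfl
    rw [hm, List.get_eq_getElem, ← List.get_eq_getElem (l := l) (i := ⟨k, by omega⟩)]
    exact hsort.rel_get_of_le (by simp [Fin.le_def]; omega)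
  calc n+1 = (l.take (n+1)).length := by rw [List.length_take]; omega
    _ = (l.take (n+1)).countP (fun y => decide (y < x)) := (List.countP_eq_length.mpr hall).symm
    _ ≤ l.countP (fun y => decide (y < x)) := by
        conv_rhs => rw [← List.take_append_drop (n+1) l]
        rw [List.countP_append]
        omega

lemma lintegral_prod_of_grouped {Ω ι ι' : Type*} [MeasurableSpace Ω] {P : Measure Ω}
    [IsProbabilityMeasure P] (F : ι → Ω → ℝ) (hF : ∀ j, Measurable (F j))
    (hind : iIndepFun F P) (J : ι' → Finset ι)
    (hdisj : ∀ i i', i ≠ i' → Disjoint (J i) (J i'))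
    (W : ι' → (ι → ℝ) → ℝ≥0∞) (hW : ∀ i, Measurable (W i))
    (hWdep : ∀ i (x y : ι → ℝ), (∀ j ∈ J i, x j = y j) → W i x = W i y)
    (s : Finset ι') :
    ∫⁻ ω, ∏ i ∈ s, W i (fun j => F j ω) ∂P = ∏ i ∈ s, ∫⁻ ω, W i (fun j => F j ω) ∂P := by
  classical
  induction s using Finset.induction_on with
  | empty => simp
  | @insert a s ha ih =>
    simp_rw [Finset.prod_insert ha]
    rw [← ih]
    have hdisj2 : Disjoint (J a) (s.biUnion J) := by
      rw [Finset.disjoint_biUnion_right]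
      exact fun i hi => hdisj a i (fun h => ha (h ▸ hi))
    have H := hind.indepFun_finset (J a) (s.biUnion J) hdisj2 hF
    -- build composed functions
    set φ : ((j : (J a : Finset ι)) → ℝ) → ℝ≥0∞ :=
      fun x => W a (fun j => if h : j ∈ J a then x ⟨j, h⟩ else 0) with hφ
    set ψ : ((j : (s.biUnion J : Finset ι)) → ℝ) → ℝ≥0∞ :=
      fun x => ∏ i ∈ s, W i (fun j => if h : j ∈ s.biUnion J then x ⟨j, h⟩ else 0) with hψ
    have hφm : Measurable φ := by
      apply (hW a).comp
      apply measurable_pi_lambda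
      intro j
      by_cases h : j ∈ J a
      · simp only [h, dif_pos]
        exact measurable_pi_apply _
      · simp only [h, dif_neg, not_false_iff]
        exact measurable_const
    have hψm : Measurable ψ := by
      apply Finset.measurable_prod
      intro i hi
      apply (hW i).comp
      apply measurable_pi_lambda
      intro j
      by_cases h : j ∈ s.biUnion J
      · simp only [h, dif_pos]
        exact measurable_pi_apply _
      · simp only [h, dif_neg, not_false_iff]
        exact measurable_const
    have Hc := H.comp hφm hψm
    have e1 : (φ ∘ fun ω (j : (J a : Finset ι)) => F j ω) = fun ω => W a (fun j => F j ω) := by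
      funext ω
      exact hWdep a _ _ (fun j hj => by simp [hj])
    have e2 : (ψ ∘ fun ω (j : (s.biUnion J : Finset ι)) => F j ω)
        = fun ω => ∏ i ∈ s, W i (fun j => F j ω) := by
      funext ω
      refine Finset.prod_congr rfl (fun i hi => ?_)
      refine hWdep i _ _ (fun j hj => ?_)
      have : j ∈ s.biUnion J := Finset.mem_biUnion.mpr ⟨i, hi, hj⟩
      simp [this]
    rw [e1, e2] at Hc
    have hm1 : Measurable (fun ω => W a (fun j => F j ω)) :=
      (hW a).comp (measurable_pi_lambda _ (fun j => hF j))
    have hm2 : Measurable (fun ω => ∏ i ∈ s, W i (fun j => F j ω)) :=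
      Finset.measurable_prod _ (fun i _ =>
        (hW i).comp (measurable_pi_lambda _ (fun j => hF j)))
    exact lintegral_mul_eq_lintegral_mul_lintegral_of_indepFun hm1 hm2 Hc

lemma prob_bad_le {Ω : Type*} [MeasureSpace Ω] [IsProbabilityMeasure (ℙ : Measure Ω)]
    {S Rf : Ω → ℝ} (hSm : Measurable S) (hRm : Measurable Rf) (hSR : IndepFun S Rf ℙ)
    {Bad : Set (ℝ×ℝ)} (hBad : MeasurableSet Bad) {q : ℝ → ℝ} (hqm : Measurable q)
    (hq0 : ∀ s, 0 ≤ q s)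
    (hq : ∀ s : ℝ, (Measure.map Rf ℙ) {r | (s,r) ∈ Bad} ≤ ENNReal.ofReal (q s))
    (hqi : Integrable (fun ω => q (S ω)) ℙ) :
    ℙ {ω | (S ω, Rf ω) ∈ Bad} ≤ ENNReal.ofReal (∫ ω, q (S ω) ∂ℙ) := by
  have hpair : Measurable fun ω => (S ω, Rf ω) := hSm.prodMk hRm
  have h1 : ℙ {ω | (S ω, Rf ω) ∈ Bad} = (Measure.map (fun ω => (S ω, Rf ω)) ℙ) Bad := by
    rw [Measure.map_apply hpair hBad]; rfl
  haveI : IsProbabilityMeasure (Measure.map Rf ℙ) := Measure.isProbabilityMeasure_map hRm.aemeasurable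
  rw [h1, (indepFun_iff_map_prod_eq_prod_map_map hSm.aemeasurable hRm.aemeasurable).mp hSR,
    Measure.prod_apply hBad]
  calc ∫⁻ s, (Measure.map Rf ℙ) (Prod.mk s ⁻¹' Bad) ∂(Measure.map S ℙ)
      ≤ ∫⁻ s, ENNReal.ofReal (q s) ∂(Measure.map S ℙ) := lintegral_mono (fun s => hq s)
    _ = ∫⁻ ω, ENNReal.ofReal (q (S ω)) ∂ℙ :=
        lintegral_map (ENNReal.measurable_ofReal.comp hqm) hSm
    _ = ENNReal.ofReal (∫ ω, q (S ω) ∂ℙ) :=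
        (ofReal_integral_eq_lintegral_ofReal hqi (ae_of_all _ fun ω => hq0 _)).symm

lemma integral_quad {Ω : Type*} [MeasureSpace Ω] [IsProbabilityMeasure (ℙ : Measure Ω)]
    {S : Ω → ℝ} (hS2 : MemLp S 2 ℙ) {μc : ℝ} (hSmean : ∫ ω, S ω ∂ℙ = μc) (a b : ℝ) :
    ∫ ω, (a*(S ω - μc) + b)^2 ∂ℙ = a^2 * variance S ℙ + b^2 := by
  have hSms : MemLp (fun ω => S ω - μc) 2 ℙ := hS2.sub (memLp_const μc)
  have hi1 : Integrable (fun ω => (S ω - μc)^2) ℙ := by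
    have h := hSms.integrable_sq
    simpa [pow_two] using h
  have hi2 : Integrable (fun ω => S ω - μc) ℙ :=
    (hS2.integrable one_le_two).sub (integrable_const μc)
  have hvar : variance S ℙ = ∫ ω, (S ω - μc)^2 ∂ℙ := by
    rw [variance_eq_integral hS2.aemeasurable]
    congr 1
    funext ω
    simp [hSmean]
  have expand : ∀ ω, (a*(S ω - μc) + b)^2 =
      a^2*(S ω - μc)^2 + (2*a*b)*(S ω - μc) + b^2 := fun ω => by ring
  rw [integral_congr_ae (ae_of_all _ fun ω => expand ω)]
  have hiA : Integrable (fun ω => a ^ 2 * (S ω - μc) ^ 2 + 2 * a * b * (S ω - μc)) ℙ := by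
    exact (hi1.const_mul _).add (hi2.const_mul _)
  rw [integral_add hiA (integrable_const _),
    integral_add (hi1.const_mul (a^2)) (hi2.const_mul (2*a*b)),
    MeasureTheory.integral_const_mul, MeasureTheory.integral_const_mul, integral_const]
  have hz : ∫ ω, (S ω - μc) ∂ℙ = 0 := by
    rw [integral_sub (hS2.integrable one_le_two) (integrable_const μc)]
    simp [hSmean]
  rw [hz, hvar]
  simp

lemma single_block_bound {Ω : Type*} [MeasureSpace Ω] [IsProbabilityMeasure (ℙ : Measure Ω)]
    {S Rf : Ω → ℝ} (hSm : Measurable S) (hRm : Measurable Rf) (hSR : IndepFun S Rf ℙ)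
    {ε μc : ℝ} (hε1 : 0 < ε) (hε2 : ε < 1/3) (hμ : 0 < μc)
    (hmap : Measure.map Rf ℙ = uniformIcc (1-ε) (1+ε))
    (hS2 : MemLp S 2 ℙ) (hSmean : ∫ ω, S ω ∂ℙ = μc)
    (hSvar : variance S ℙ ≤ ε^2*μc^2 * ((1-ε)^2*(1+ε-ε^2)/(1+ε))) :
    ℙ {ω | (1+ε)*μc < S ω * Rf ω} ≤ ENNReal.ofReal (1/4) ∧
    ℙ {ω | S ω * Rf ω < (1-ε)*μc} ≤ ENNReal.ofReal (1/4) := by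
  have hs₀ : (0:ℝ) < (1-ε^2)/2 := by nlinarith
  have hεne : (ε:ℝ) ≠ 0 := ne_of_gt hε1
  have hμne : μc ≠ 0 := ne_of_gt hμ
  set a : ℝ := (1+ε)/(2*ε*μc) with ha
  set b : ℝ := (1-ε^2)/2 with hb
  have hqeq : ∀ c : ℝ, ∀ s : ℝ, ((1+ε)/(2*ε)*(c*(s-μc))/μc + (1-ε^2)/2)^2 / (4*((1-ε^2)/2))
      = ((c*a)*(s-μc) + b)^2 / (4*b) := by
    intro c s
    rw [ha, hb]
    ring
  -- the key numeric bound
  have key : ∀ c : ℝ, c^2 = 1 → ∫ ω, ((c*a)*(S ω - μc) + b)^2 / (4*b) ∂ℙ ≤ 1/4 := by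
    intro c hc
    rw [integral_div, integral_quad hS2 hSmean]
    rw [div_le_iff₀ (by linarith : (0:ℝ) < 4*b)]
    have hca : (c*a)^2 = a^2 := by rw [mul_pow, hc, one_mul]
    rw [hca]
    have h1 : a^2 * variance S ℙ ≤ a^2 * (ε^2*μc^2 * ((1-ε)^2*(1+ε-ε^2)/(1+ε))) :=
      mul_le_mul_of_nonneg_left hSvar (sq_nonneg a)
    have h2 : a^2 * (ε^2*μc^2 * ((1-ε)^2*(1+ε-ε^2)/(1+ε)))
        = (1+ε)*(1-ε)^2*(1+ε-ε^2)/4 := by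
      rw [ha]
      field_simp
      ring
    have h3 : (1+ε)*(1-ε)^2*(1+ε-ε^2)/4 + b^2 ≤ 1/4*(4*b) := by
      rw [hb]
      nlinarith [sq_nonneg ε, hε1.le]
    linarith
  constructor
  · -- plus side
    have h := prob_bad_le (Bad := {p : ℝ×ℝ | (1+ε)*μc < p.1*p.2}) hSm hRm hSR
      (measurableSet_lt measurable_const (measurable_fst.mul measurable_snd))
      (q := fun s => ((1*a)*(s-μc) + b)^2 / (4*b))
      (by fun_prop)
      (fun s => by positivity)
      (fun s => by
        rw [hmap]
        have h0 := unif_plus hε1 hε2 hμ s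
        have he : ((1+ε)/(2*ε)*((s-μc)/μc) + (1-ε^2)/2)^2 / (4*((1-ε^2)/2))
            = (1*a*(s-μc)+b)^2/(4*b) := by rw [ha, hb]; ring
        rw [he] at h0
        exact h0)
      (by
        have hm2 : MemLp (fun ω => (1*a)*(S ω - μc) + b) 2 ℙ :=
          (((hS2.sub (memLp_const μc)).const_mul (1*a)).add (memLp_const b))
        have := hm2.integrable_sq
        apply Integrable.div_const
        simpa [pow_two] using this)
    exact le_trans h (ENNReal.ofReal_le_ofReal (key 1 (by norm_num)))
  · have h := prob_bad_le (Bad := {p : ℝ×ℝ | p.1*p.2 < (1-ε)*μc}) hSm hRm hSR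
      (measurableSet_lt (measurable_fst.mul measurable_snd) measurable_const)
      (q := fun s => (((-1)*a)*(s-μc) + b)^2 / (4*b))
      (by fun_prop)
      (fun s => by positivity)
      (fun s => by
        rw [hmap]
        have h0 := unif_minus hε1 hε2 hμ s
        have he : ((1+ε)/(2*ε)*((μc-s)/μc) + (1-ε^2)/2)^2 / (4*((1-ε^2)/2))
            = ((-1)*a*(s-μc)+b)^2/(4*b) := by rw [ha, hb]; ring
        rw [he] at h0
        exact h0)
      (by
        have hm2 : MemLp (fun ω => ((-1)*a)*(S ω - μc) + b) 2 ℙ :=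
          (((hS2.sub (memLp_const μc)).const_mul ((-1)*a)).add (memLp_const b))
        have := hm2.integrable_sq
        apply Integrable.div_const
        simpa [pow_two] using this)
    exact le_trans h (ENNReal.ofReal_le_ofReal (key (-1) (by norm_num)))

lemma two_quarter : (2:ℝ≥0∞) * ENNReal.ofReal (1/4) + 1 = ENNReal.ofReal (3/2) := by
  rw [← ENNReal.ofReal_ofNat 2, ← ENNReal.ofReal_mul (by norm_num), ← ENNReal.ofReal_one,
    ← ENNReal.ofReal_add (by norm_num) (by norm_num)]
  norm_num

set_option maxHeartbeats 1000000 in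
/-- main theorem: Let `X₁,X₂,…` be i.i.d. with mean `μ > 0` and standard
deviation at most `cμ`, `ε ∈ (0,1/3)`, `δ ∈ (0,1)`.  With `m = ⌈(c/ε)² f(ε)⌉`,
`K = ⌈ln(2/δ)/ln(4/3)⌉` and `n = 2K+1`, let `Sᵢ` be the average of the `i`-th disjoint
block of `m` samples and `R₁,…,R_n` i.i.d. uniform on `[1−ε,1+ε]` and independent of the
`Xⱼ`.  Then `μ̂ = median{S₁R₁,…,S_nR_n}` satisfies `P(|μ̂ − μ| > εμ) ≤ δ`, and it is
computed from exactly `m·n = ⌈(c/ε)² f(ε)⌉(2⌈ln(2/δ)/ln(4/3)⌉ + 1)` samples. -/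
theorem new_estimate_ras {Ω : Type*} [MeasureSpace Ω]
    [IsProbabilityMeasure (ℙ : Measure Ω)]
    (c μ ε δ : ℝ) (hc : 0 < c) (hμ : 0 < μ)
    (hε : ε ∈ Set.Ioo (0 : ℝ) (1 / 3)) (hδ : δ ∈ Set.Ioo (0 : ℝ) 1)
    (m K : ℕ) (hm : m = ⌈(c / ε) ^ 2 * nuisance ε⌉₊)
    (hK : K = ⌈Real.log (2 / δ) / Real.log (4 / 3)⌉₊)
    (X : ℕ → Ω → ℝ) (R : Fin (2 * K + 1) → Ω → ℝ)
    (hXm : ∀ i, Measurable (X i)) (hRm : ∀ i, Measurable (R i))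
    (hindep : iIndepFun (Sum.elim X R) ℙ)
    (hdist : ∀ i, Measure.map (X i) ℙ = Measure.map (X 0) ℙ)
    (hX2 : ∀ i, MemLp (X i) 2 ℙ)
    (hmean : ∀ i, ∫ ω, X i ω ∂ℙ = μ)
    (hsd : ∀ i, Real.sqrt (variance (X i) ℙ) ≤ c * μ)
    (hR : ∀ i, Measure.map (R i) ℙ = uniformIcc (1 - ε) (1 + ε)) :
    ℙ {ω | ε * μ <
        |medianOf (fun i : Fin (2 * K + 1) =>
          ((∑ l ∈ Finset.range m, X (i.val * m + l) ω) / m) * R i ω) - μ|} ≤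
        ENNReal.ofReal δ ∧
      m * (2 * K + 1) =
        ⌈(c / ε) ^ 2 * nuisance ε⌉₊ * (2 * ⌈Real.log (2 / δ) / Real.log (4 / 3)⌉₊ + 1) := by
  classical
  obtain ⟨hε0, hε13⟩ := hε
  obtain ⟨hδ0, hδ1⟩ := hδ
  refine ⟨?_, by rw [hm, hK]⟩
  -- basic positivity
  have h1ε : (0:ℝ) < 1 - ε := by linarith
  have hqe : (0:ℝ) < 1 + ε - ε^2 := by nlinarith
  have hnu : 0 < nuisance ε := by
    rw [nuisance]
    exact div_pos (by linarith) (mul_pos (by positivity) hqe)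
  have hmpos : 0 < m := by
    rw [hm]
    exact Nat.ceil_pos.mpr (by positivity)
  have hmR : (0:ℝ) < (m:ℝ) := by exact_mod_cast hmpos
  have hmne : (m:ℝ) ≠ 0 := ne_of_gt hmR
  -- notation
  set F : (ℕ ⊕ Fin (2*K+1)) → Ω → ℝ := Sum.elim X R with hF
  have hFm : ∀ j, Measurable (F j) := by
    rintro (j | j)
    · exact hXm j
    · exact hRm j
  set Sb : Fin (2*K+1) → Ω → ℝ :=
    fun i ω => (∑ l ∈ Finset.range m, X (i.val * m + l) ω) / m with hSb
  have hSmeas : ∀ i, Measurable (Sb i) := fun i =>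
    (Finset.measurable_sum _ (fun l _ => hXm _)).div_const _
  have hsum_eq : ∀ i, Sb i = (m:ℝ)⁻¹ • (∑ l ∈ Finset.range m, X (i.val*m+l)) := by
    intro i
    funext ω
    simp [hSb, Finset.sum_apply, div_eq_inv_mul]
  -- L² membership
  have hSint : ∀ i, MemLp (Sb i) 2 ℙ := by
    intro i
    rw [hsum_eq i]
    exact (memLp_finset_sum' _ (fun l _ => hX2 _)).const_smul _
  -- mean of block averages
  have hSmean : ∀ i, ∫ ω, Sb i ω ∂ℙ = μ := by
    intro i
    rw [hsum_eq i]
    simp only [Pi.smul_apply, smul_eq_mul, Finset.sum_apply]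
    rw [MeasureTheory.integral_const_mul,
      integral_finset_sum _ (fun l _ => (hX2 _).integrable one_le_two)]
    simp only [hmean, Finset.sum_const, Finset.card_range, nsmul_eq_mul]
    field_simp
  -- variance bound
  have hSvar : ∀ i, variance (Sb i) ℙ ≤ ε^2*μ^2 * ((1-ε)^2*(1+ε-ε^2)/(1+ε)) := by
    intro i
    have hvarX : ∀ j, variance (X j) ℙ ≤ c^2*μ^2 := by
      intro j
      have h1 := hsd j
      have h2 : variance (X j) ℙ = Real.sqrt (variance (X j) ℙ)^2 :=
        (Real.sq_sqrt (variance_nonneg _ _)).symm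
      rw [h2]
      nlinarith [Real.sqrt_nonneg (variance (X j) ℙ)]
    rw [hsum_eq i, variance_smul]
    have hvs : variance (∑ l ∈ Finset.range m, X (i.val*m+l)) ℙ
        = ∑ l ∈ Finset.range m, variance (X (i.val*m+l)) ℙ := by
      apply IndepFun.variance_sum (fun l _ => hX2 _)
      intro l hl l' hl' hne
      exact hindep.indepFun
        (show (Sum.inl (i.val*m+l) : ℕ ⊕ Fin (2*K+1)) ≠ Sum.inl (i.val*m+l') from
          fun hcon => by simp only [Sum.inl.injEq] at hcon; omega)
    rw [hvs]
    have hsumle : ∑ l ∈ Finset.range m, variance (X (i.val*m+l)) ℙ ≤ (m:ℝ) * (c^2*μ^2) := by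
      calc ∑ l ∈ Finset.range m, variance (X (i.val*m+l)) ℙ
          ≤ ∑ _l ∈ Finset.range m, c^2*μ^2 := Finset.sum_le_sum (fun l _ => hvarX _)
        _ = (m:ℝ) * (c^2*μ^2) := by simp [Finset.sum_const, Finset.card_range]
    have hmge : ((c/ε)^2 * nuisance ε : ℝ) ≤ (m:ℝ) := by
      rw [hm]; exact Nat.le_ceil _
    have step1 : ((m:ℝ)⁻¹)^2 * ∑ l ∈ Finset.range m, variance (X (i.val*m+l)) ℙ
        ≤ c^2*μ^2/(m:ℝ) := by
      have := mul_le_mul_of_nonneg_left hsumle (by positivity : (0:ℝ) ≤ ((m:ℝ)⁻¹)^2)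
      calc ((m:ℝ)⁻¹)^2 * ∑ l ∈ Finset.range m, variance (X (i.val*m+l)) ℙ
          ≤ ((m:ℝ)⁻¹)^2 * ((m:ℝ) * (c^2*μ^2)) := this
        _ = c^2*μ^2/(m:ℝ) := by field_simp
    refine step1.trans ?_
    have hpos2 : (0:ℝ) < (c/ε)^2 * nuisance ε := by positivity
    have step2 : c^2*μ^2/(m:ℝ) ≤ c^2*μ^2/((c/ε)^2 * nuisance ε) := by
      apply div_le_div_of_nonneg_left (by positivity) hpos2 hmge
    refine step2.trans (le_of_eq ?_)
    rw [nuisance]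
    field_simp
  -- independence of block average and R i
  have hSR : ∀ i, IndepFun (Sb i) (R i) ℙ := by
    intro i
    have hinj : ∀ x ∈ Finset.range m, ∀ y ∈ Finset.range m,
        (Sum.inl (i.val*m+x) : ℕ ⊕ Fin (2*K+1)) = Sum.inl (i.val*m+y) → x = y := by
      intro x _ y _ h
      simp only [Sum.inl.injEq] at h
      omega
    have h1 := hindep.indepFun_finsetSum_of_notMem hFm
      (s := (Finset.range m).image (fun l => (Sum.inl (i.val*m+l) : ℕ ⊕ Fin (2*K+1))))
      (i := Sum.inr i) (by simp)
    have h2 := h1.comp (g := R i) (φ := fun x : ℝ => x / (m:ℝ)) (ψ := id)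
      (measurable_id.div_const (m:ℝ)) measurable_id
    have he : ((fun x : ℝ => x / (m:ℝ)) ∘ (∑ j ∈ (Finset.range m).image
        (fun l => (Sum.inl (i.val*m+l) : ℕ ⊕ Fin (2*K+1))), F j)) = Sb i := by
      funext ω
      simp only [Function.comp_apply, Finset.sum_apply]
      rw [Finset.sum_image hinj]
      rfl
    rw [he] at h2
    exact h2
  -- per-block deviation bounds
  have hbound := fun i => single_block_bound (hSmeas i) (hRm i) (hSR i) hε0 hε13 hμ (hR i)
    (hSint i) (hSmean i) (hSvar i)
  -- weights
  set Gp : ℝ → ℝ≥0∞ := fun x => if (1+ε)*μ < x then 3 else 1 with hGp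
  set Gm : ℝ → ℝ≥0∞ := fun x => if x < (1-ε)*μ then 3 else 1 with hGm
  have hGpm : Measurable Gp :=
    Measurable.ite (measurableSet_lt measurable_const measurable_id)
      measurable_const measurable_const
  have hGmm : Measurable Gm :=
    Measurable.ite (measurableSet_lt measurable_id measurable_const)
      measurable_const measurable_const
  have hGp1 : ∀ x, 1 ≤ Gp x := by
    intro x; rw [hGp]; dsimp only; split <;> norm_num
  have hGm1 : ∀ x, 1 ≤ Gm x := by
    intro x; rw [hGm]; dsimp only; split <;> norm_num
  set J : Fin (2*K+1) → Finset (ℕ ⊕ Fin (2*K+1)) :=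
    fun i => ((Finset.range m).image (fun l => Sum.inl (i.val*m+l))) ∪ {Sum.inr i} with hJ
  have hdisj : ∀ i i', i ≠ i' → Disjoint (J i) (J i') := by
    intro i i' hne
    have hii : i.val ≠ i'.val := fun h => hne (Fin.ext h)
    rw [Finset.disjoint_left]
    intro j hj hj'
    simp only [hJ, Finset.mem_union, Finset.mem_image, Finset.mem_range,
      Finset.mem_singleton] at hj hj'
    rcases hj with ⟨l, hl, rfl⟩ | rfl
    · rcases hj' with ⟨l', hl', he⟩ | he
      · simp only [Sum.inl.injEq] at he
        rcases Nat.lt_or_ge i.val i'.val with h | h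
        · have h2 : (i.val+1)*m ≤ i'.val*m := Nat.mul_le_mul_right m h
          have h3 : i.val*m + l < (i.val+1)*m := by
            have : (i.val+1)*m = i.val*m + m := by ring
            omega
          omega
        · have h4 : i'.val < i.val := by omega
          have h2 : (i'.val+1)*m ≤ i.val*m := Nat.mul_le_mul_right m h4
          have h3 : i'.val*m + l' < (i'.val+1)*m := by
            have : (i'.val+1)*m = i'.val*m + m := by ring
            omega
          omega
      · exact Sum.inl_ne_inr he
    · rcases hj' with ⟨l', hl', he⟩ | he
      · exact Sum.inl_ne_inr he
      · exact hne (Sum.inr.inj he)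
  -- membership facts
  have hmemJ1 : ∀ (i : Fin (2*K+1)) (l : ℕ), l ∈ Finset.range m →
      (Sum.inl (i.val*m+l) : ℕ ⊕ Fin (2*K+1)) ∈ J i := by
    intro i l hl
    rw [hJ]
    exact Finset.mem_union_left _ (Finset.mem_image.mpr ⟨l, hl, rfl⟩)
  have hmemJ2 : ∀ i : Fin (2*K+1), (Sum.inr i : ℕ ⊕ Fin (2*K+1)) ∈ J i := by
    intro i
    rw [hJ]
    exact Finset.mem_union_right _ (Finset.mem_singleton_self _)
  set Wp : Fin (2*K+1) → ((ℕ ⊕ Fin (2*K+1)) → ℝ) → ℝ≥0∞ :=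
    fun i y => Gp (((∑ l ∈ Finset.range m, y (Sum.inl (i.val*m+l)))/(m:ℝ)) * y (Sum.inr i))
    with hWp
  set Wm : Fin (2*K+1) → ((ℕ ⊕ Fin (2*K+1)) → ℝ) → ℝ≥0∞ :=
    fun i y => Gm (((∑ l ∈ Finset.range m, y (Sum.inl (i.val*m+l)))/(m:ℝ)) * y (Sum.inr i))
    with hWm
  have hWpm : ∀ i, Measurable (Wp i) := by
    intro i
    refine hGpm.comp ?_
    exact (((Finset.measurable_sum (Finset.range m) (fun l _ =>
      measurable_pi_apply (Sum.inl (i.val*m+l)))).div_const _).mul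
      (measurable_pi_apply (Sum.inr i)))
  have hWmm : ∀ i, Measurable (Wm i) := by
    intro i
    refine hGmm.comp ?_
    exact (((Finset.measurable_sum (Finset.range m) (fun l _ =>
      measurable_pi_apply (Sum.inl (i.val*m+l)))).div_const _).mul
      (measurable_pi_apply (Sum.inr i)))
  have hWpdep : ∀ i (x y : (ℕ ⊕ Fin (2*K+1)) → ℝ),
      (∀ j ∈ J i, x j = y j) → Wp i x = Wp i y := by
    intro i x y hxy
    rw [hWp]
    dsimp only
    rw [Finset.sum_congr rfl (fun l hl => hxy _ (hmemJ1 i l hl)), hxy _ (hmemJ2 i)]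
  have hWmdep : ∀ i (x y : (ℕ ⊕ Fin (2*K+1)) → ℝ),
      (∀ j ∈ J i, x j = y j) → Wm i x = Wm i y := by
    intro i x y hxy
    rw [hWm]
    dsimp only
    rw [Finset.sum_congr rfl (fun l hl => hxy _ (hmemJ1 i l hl)), hxy _ (hmemJ2 i)]
  have happ_p : ∀ (i : Fin (2*K+1)) (ω : Ω), Wp i (fun j => F j ω) = Gp (Sb i ω * R i ω) :=
    fun i ω => rfl
  have happ_m : ∀ (i : Fin (2*K+1)) (ω : Ω), Wm i (fun j => F j ω) = Gm (Sb i ω * R i ω) :=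
    fun i ω => rfl
  -- factor bounds
  have hfacp : ∀ i, ∫⁻ ω, Wp i (fun j => F j ω) ∂ℙ ≤ ENNReal.ofReal (3/2) := by
    intro i
    have hBmeas : MeasurableSet {ω | (1+ε)*μ < Sb i ω * R i ω} :=
      measurableSet_lt measurable_const ((hSmeas i).mul (hRm i))
    have he : (fun ω => Wp i (fun j => F j ω))
        = fun ω => ({ω | (1+ε)*μ < Sb i ω * R i ω}).indicator (fun _ => (2:ℝ≥0∞)) ω + 1 := by
      funext ω
      rw [happ_p i ω, hGp]
      by_cases h : (1+ε)*μ < Sb i ω * R i ω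
      · have hmem : ω ∈ {ω | (1+ε)*μ < Sb i ω * R i ω} := h
        rw [Set.indicator_of_mem hmem]
        simp only [if_pos h]
        norm_num
      · have hmem : ω ∉ {ω | (1+ε)*μ < Sb i ω * R i ω} := h
        rw [Set.indicator_of_notMem hmem]
        simp only [if_neg h]
        norm_num
    rw [he, lintegral_add_right _ measurable_const,
      lintegral_indicator_const hBmeas, lintegral_one, measure_univ]
    calc (2:ℝ≥0∞) * ℙ {ω | (1+ε)*μ < Sb i ω * R i ω} + 1
        ≤ 2 * ENNReal.ofReal (1/4) + 1 := by
          gcongr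
          exact (hbound i).1
      _ = ENNReal.ofReal (3/2) := two_quarter
  have hfacm : ∀ i, ∫⁻ ω, Wm i (fun j => F j ω) ∂ℙ ≤ ENNReal.ofReal (3/2) := by
    intro i
    have hBmeas : MeasurableSet {ω | Sb i ω * R i ω < (1-ε)*μ} :=
      measurableSet_lt ((hSmeas i).mul (hRm i)) measurable_const
    have he : (fun ω => Wm i (fun j => F j ω))
        = fun ω => ({ω | Sb i ω * R i ω < (1-ε)*μ}).indicator (fun _ => (2:ℝ≥0∞)) ω + 1 := by
      funext ω
      rw [happ_m i ω, hGm]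
      by_cases h : Sb i ω * R i ω < (1-ε)*μ
      · have hmem : ω ∈ {ω | Sb i ω * R i ω < (1-ε)*μ} := h
        rw [Set.indicator_of_mem hmem]
        simp only [if_pos h]
        norm_num
      · have hmem : ω ∉ {ω | Sb i ω * R i ω < (1-ε)*μ} := h
        rw [Set.indicator_of_notMem hmem]
        simp only [if_neg h]
        norm_num
    rw [he, lintegral_add_right _ measurable_const,
      lintegral_indicator_const hBmeas, lintegral_one, measure_univ]
    calc (2:ℝ≥0∞) * ℙ {ω | Sb i ω * R i ω < (1-ε)*μ} + 1
        ≤ 2 * ENNReal.ofReal (1/4) + 1 := by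
          gcongr
          exact (hbound i).2
      _ = ENNReal.ofReal (3/2) := two_quarter
  -- numeric: (3/2)^(2K+1)/3^(K+1) = (3/4)^K/2
  have hnum : ((3:ℝ)/2)^(2*K+1) / 3^(K+1) = (3/4)^K / 2 := by
    have e1 : ((3:ℝ)/2)^(2*K+1) = (9/4)^K * (3/2) := by
      rw [pow_succ, pow_mul]
      norm_num
    have e2 : ((3:ℝ))^(K+1) = 3^K * 3 := pow_succ _ _
    have e3 : ((9:ℝ)/4)^K / (3:ℝ)^K = (3/4)^K := by
      rw [← div_pow]
      norm_num
    rw [e1, e2]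
    rw [show ((9:ℝ)/4)^K * (3/2) / (3^K * 3) = ((9/4)^K / 3^K) * ((3/2)/3) by ring]
    rw [e3]
    ring
  -- generic Markov step
  have hmarkov : ∀ (W : Fin (2*K+1) → ((ℕ ⊕ Fin (2*K+1)) → ℝ) → ℝ≥0∞),
      (∀ i, Measurable (W i)) →
      (∀ i (x y : (ℕ ⊕ Fin (2*K+1)) → ℝ), (∀ j ∈ J i, x j = y j) → W i x = W i y) →
      (∀ i, ∫⁻ ω, W i (fun j => F j ω) ∂ℙ ≤ ENNReal.ofReal (3/2)) →
      ∀ (A : Set Ω), (A ⊆ {ω | (3:ℝ≥0∞)^(K+1) ≤ ∏ i, W i (fun j => F j ω)}) →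
      ℙ A ≤ ENNReal.ofReal ((3/4)^K / 2) := by
    intro W hWmeas hWdep hWfac A hA
    have hprodmeas : Measurable (fun ω => ∏ i, W i (fun j => F j ω)) :=
      Finset.measurable_prod _ (fun i _ =>
        (hWmeas i).comp (measurable_pi_lambda _ (fun j => hFm j)))
    have hInt : ∫⁻ ω, ∏ i, W i (fun j => F j ω) ∂ℙ ≤ ENNReal.ofReal ((3/2)^(2*K+1)) := by
      rw [lintegral_prod_of_grouped F hFm hindep J hdisj W hWmeas hWdep Finset.univ]
      calc ∏ i, ∫⁻ ω, W i (fun j => F j ω) ∂ℙ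
          ≤ ∏ _i : Fin (2*K+1), ENNReal.ofReal (3/2) :=
            Finset.prod_le_prod' (fun i _ => hWfac i)
        _ = ENNReal.ofReal ((3/2)^(2*K+1)) := by
            rw [Finset.prod_const, Finset.card_univ, Fintype.card_fin,
              ← ENNReal.ofReal_pow (by norm_num)]
    have h3ne0 : ((3:ℝ≥0∞))^(K+1) ≠ 0 := by positivity
    have h3netop : ((3:ℝ≥0∞))^(K+1) ≠ ⊤ := by
      exact ENNReal.pow_ne_top (by norm_num)
    calc ℙ A ≤ ℙ {ω | (3:ℝ≥0∞)^(K+1) ≤ ∏ i, W i (fun j => F j ω)} := measure_mono hA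
      _ ≤ (∫⁻ ω, ∏ i, W i (fun j => F j ω) ∂ℙ) / 3^(K+1) := by
          rw [ENNReal.le_div_iff_mul_le (Or.inl h3ne0) (Or.inl h3netop), mul_comm]
          exact mul_meas_ge_le_lintegral₀ hprodmeas.aemeasurable _
      _ ≤ ENNReal.ofReal ((3/2)^(2*K+1)) / 3^(K+1) := by
          exact ENNReal.div_le_div_right hInt _
      _ = ENNReal.ofReal ((3/4)^K / 2) := by
          rw [show ((3:ℝ≥0∞))^(K+1) = ENNReal.ofReal ((3:ℝ)^(K+1)) by
            rw [ENNReal.ofReal_pow (by norm_num : (0:ℝ) ≤ 3), ENNReal.ofReal_ofNat]]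
          rw [← ENNReal.ofReal_div_of_pos (by positivity), hnum]
  -- the two tail events
  have hAp : ℙ {ω | K+1 ≤ (Finset.univ.filter fun i => (1+ε)*μ < Sb i ω * R i ω).card}
      ≤ ENNReal.ofReal ((3/4)^K / 2) := by
    apply hmarkov Wp hWpm hWpdep hfacp
    intro ω hω
    simp only [Set.mem_setOf_eq] at hω ⊢
    calc (3:ℝ≥0∞)^(K+1)
        ≤ 3^(Finset.univ.filter fun i => (1+ε)*μ < Sb i ω * R i ω).card :=
          pow_le_pow_right₀ (by norm_num) hω
      _ = ∏ i ∈ (Finset.univ.filter fun i => (1+ε)*μ < Sb i ω * R i ω),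
            Wp i (fun j => F j ω) := by
          have hval : ∀ i ∈ (Finset.univ.filter fun i => (1+ε)*μ < Sb i ω * R i ω),
              Wp i (fun j => F j ω) = 3 := by
            intro i hi
            rw [happ_p i ω]
            simp only [hGp]
            rw [if_pos (Finset.mem_filter.mp hi).2]
          rw [Finset.prod_congr rfl hval, Finset.prod_const]
      _ ≤ ∏ i, Wp i (fun j => F j ω) := by
          apply Finset.prod_le_prod_of_subset_of_one_le' (Finset.filter_subset _ _)
          intro i _ _
          rw [happ_p i ω]
          exact hGp1 _
  have hAm : ℙ {ω | K+1 ≤ (Finset.univ.filter fun i => Sb i ω * R i ω < (1-ε)*μ).card}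
      ≤ ENNReal.ofReal ((3/4)^K / 2) := by
    apply hmarkov Wm hWmm hWmdep hfacm
    intro ω hω
    simp only [Set.mem_setOf_eq] at hω ⊢
    calc (3:ℝ≥0∞)^(K+1)
        ≤ 3^(Finset.univ.filter fun i => Sb i ω * R i ω < (1-ε)*μ).card :=
          pow_le_pow_right₀ (by norm_num) hω
      _ = ∏ i ∈ (Finset.univ.filter fun i => Sb i ω * R i ω < (1-ε)*μ),
            Wm i (fun j => F j ω) := by
          have hval : ∀ i ∈ (Finset.univ.filter fun i => Sb i ω * R i ω < (1-ε)*μ),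
              Wm i (fun j => F j ω) = 3 := by
            intro i hi
            rw [happ_m i ω]
            simp only [hGm]
            rw [if_pos (Finset.mem_filter.mp hi).2]
          rw [Finset.prod_congr rfl hval, Finset.prod_const]
      _ ≤ ∏ i, Wm i (fun j => F j ω) := by
          apply Finset.prod_le_prod_of_subset_of_one_le' (Finset.filter_subset _ _)
          intro i _ _
          rw [happ_m i ω]
          exact hGm1 _
  -- inclusion of the target event
  have hsub : {ω | ε * μ <
        |medianOf (fun i : Fin (2 * K + 1) =>
          ((∑ l ∈ Finset.range m, X (i.val * m + l) ω) / m) * R i ω) - μ|}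
      ⊆ {ω | K+1 ≤ (Finset.univ.filter fun i => (1+ε)*μ < Sb i ω * R i ω).card}
        ∪ {ω | K+1 ≤ (Finset.univ.filter fun i => Sb i ω * R i ω < (1-ε)*μ).card} := by
    intro ω hω
    simp only [Set.mem_setOf_eq] at hω
    rcases lt_abs.mp hω with h | h
    · left
      have h' : (1+ε)*μ < medianOf (fun i => Sb i ω * R i ω) := by
        have : (1+ε)*μ = μ + ε*μ := by ring
        rw [this]
        have hmm : medianOf (fun i : Fin (2 * K + 1) =>
            ((∑ l ∈ Finset.range m, X (i.val * m + l) ω) / m) * R i ω)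
            = medianOf (fun i => Sb i ω * R i ω) := rfl
        rw [hmm] at h
        linarith
      exact count_of_lt_median _ h'
    · right
      have h' : medianOf (fun i => Sb i ω * R i ω) < (1-ε)*μ := by
        have : (1-ε)*μ = μ - ε*μ := by ring
        rw [this]
        have hmm : medianOf (fun i : Fin (2 * K + 1) =>
            ((∑ l ∈ Finset.range m, X (i.val * m + l) ω) / m) * R i ω)
            = medianOf (fun i => Sb i ω * R i ω) := rfl
        rw [hmm] at h
        linarith
      exact count_of_median_lt _ h'
  -- final chain
  have h34 : ((3:ℝ)/4)^K ≤ δ/2 := by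
    have hKge : (Real.log (2/δ) / Real.log (4/3)) ≤ (K:ℝ) := by
      rw [hK]; exact Nat.le_ceil _
    have hlog43 : 0 < Real.log (4/3) := Real.log_pos (by norm_num)
    have h2δ : (2:ℝ)/δ ≤ (4/3)^K := by
      rw [← Real.log_le_log_iff (by positivity) (by positivity), Real.log_pow]
      calc Real.log (2/δ) = (Real.log (2/δ)/Real.log (4/3)) * Real.log (4/3) := by
            field_simp
        _ ≤ (K:ℝ) * Real.log (4/3) := mul_le_mul_of_nonneg_right hKge hlog43.le
    have e4 : ((3:ℝ)/4)^K = ((4/3:ℝ)^K)⁻¹ := by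
      rw [← inv_pow]
      norm_num
    have e5 : δ/2 = ((2:ℝ)/δ)⁻¹ := by
      field_simp
    rw [e4, e5]
    exact inv_anti₀ (by positivity) h2δ
  calc ℙ {ω | ε * μ <
        |medianOf (fun i : Fin (2 * K + 1) =>
          ((∑ l ∈ Finset.range m, X (i.val * m + l) ω) / m) * R i ω) - μ|}
      ≤ ℙ ({ω | K+1 ≤ (Finset.univ.filter fun i => (1+ε)*μ < Sb i ω * R i ω).card}
        ∪ {ω | K+1 ≤ (Finset.univ.filter fun i => Sb i ω * R i ω < (1-ε)*μ).card}) :=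
        measure_mono hsub
    _ ≤ ℙ {ω | K+1 ≤ (Finset.univ.filter fun i => (1+ε)*μ < Sb i ω * R i ω).card}
        + ℙ {ω | K+1 ≤ (Finset.univ.filter fun i => Sb i ω * R i ω < (1-ε)*μ).card} :=
        measure_union_le _ _
    _ ≤ ENNReal.ofReal ((3/4)^K / 2) + ENNReal.ofReal ((3/4)^K / 2) :=
        add_le_add hAp hAm
    _ = ENNReal.ofReal ((3/4)^K) := by
        rw [← ENNReal.ofReal_add (by positivity) (by positivity)]
        norm_num
    _ ≤ ENNReal.ofReal δ := by
        apply ENNReal.ofReal_le_ofReal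
        linarith
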